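/- The Gerstenhaber partition λ_I is invariant under the basic move: if ideals I and J of the type A_n root poset are related by a basic move, then λ_I = λ_J. -/

import Mathlib

/-- Upper order ideals in the positive roots of type `A n`
(pairs `[i,j]`, `1 ≤ i ≤ j ≤ n`, with `[i,j] ≼ [i',j']` iff `i' ≤ i ∧ j ≤ j'`). -/
def IsIdealA (n : ℕ) (I : Finset (ℕ × ℕ)) : Prop :=
  (∀ p ∈ I, 1 ≤ p.1 ∧ p.1 ≤ p.2 ∧ p.2 ≤ n) ∧
  (∀ p ∈ I, ∀ q : ℕ × ℕ, 1 ≤ q.1 → q.1 ≤ p.1 → p.2 ≤ q.2 → q.2 ≤ n → q ∈ I)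

/-- Minimal roots of an ideal. -/
def minRootsA (I : Finset (ℕ × ℕ)) : Finset (ℕ × ℕ) :=
  I.filter (fun p => ∀ q ∈ I, p.1 ≤ q.1 → q.2 ≤ p.2 → q = p)

/-- `I` is `k`-stable if `k` is neither a left nor a right endpoint of any minimal
root of `I`. -/
def KStable (I : Finset (ℕ × ℕ)) (k : ℕ) : Prop :=
  ∀ p ∈ minRootsA I, p.1 ≠ k ∧ p.2 ≠ k

/-- The basic move: remove a minimal root `[a,b]` from the ideal `I` when `I` is
`(a-1)`-stable (with `a ≥ 2`) or `(b+1)`-stable (with `b+1 ≤ n`). -/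
def BasicMove (n : ℕ) (I J : Finset (ℕ × ℕ)) : Prop :=
  IsIdealA n I ∧ ∃ p ∈ minRootsA I, J = I.erase p ∧
    ((2 ≤ p.1 ∧ KStable I (p.1 - 1)) ∨ (p.2 + 1 ≤ n ∧ KStable I (p.2 + 1)))

/-- An upper order ideal of matrix positions: `I ⊆ {(i,j) : 1 ≤ i < j ≤ n+1}` with
`(i,j) ∈ I`, `i' ≤ i`, `j ≤ j'`, `i' < j'` implying `(i',j') ∈ I`. -/
def IsMatrixIdeal (n : ℕ) (I : Finset (ℕ × ℕ)) : Prop :=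
  (∀ p ∈ I, 1 ≤ p.1 ∧ p.1 < p.2 ∧ p.2 ≤ n + 1) ∧
  (∀ p ∈ I, ∀ q : ℕ × ℕ, 1 ≤ q.1 → q.1 ≤ p.1 → p.2 ≤ q.2 → q.2 ≤ n + 1 → q ∈ I)

/-- `s` is a (greedy) characteristic sequence for the ideal `I` on the set `R` of
still-available indices: it starts at the smallest element of `R`; each element `i`
is followed by the smallest available `j` with `(i,j) ∈ I`; and it stops when no
such `j` exists. -/
def IsCharSeq (I : Finset (ℕ × ℕ)) (R : Finset ℕ) (s : List ℕ) : Prop :=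
  (∃ h : s ≠ [], (s.head h ∈ R ∧ ∀ m ∈ R, s.head h ≤ m) ∧
    ∀ j ∈ R, (s.getLast h, j) ∉ I) ∧
  s.Chain' (fun i j => j ∈ R ∧ (i, j) ∈ I ∧ ∀ j' ∈ R, (i, j') ∈ I → j ≤ j')

/-- `L` is the list of characteristic sequences produced by Gerstenhaber's algorithm
on the ideal `I`: starting with all of `{1, …, n+1}` available, each sequence is the
greedy characteristic sequence on the remaining indices, which are then removed,
until no index remains. -/
def IsCharSeqList (n : ℕ) (I : Finset (ℕ × ℕ)) (L : List (List ℕ)) : Prop :=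
  ∃ R : ℕ → Finset ℕ, R 0 = Finset.Icc 1 (n + 1) ∧ R L.length = ∅ ∧
    ∀ k < L.length, IsCharSeq I (R k) (L.getD k []) ∧
      R (k + 1) = R k \ (L.getD k []).toFinset


/-- The root ideal `I` of type `A n` (root `[i,j]`) viewed as an ideal of matrix
positions (`[i,j]` corresponds to the entry `(i, j+1)`). -/
def toMatrixIdeal (I : Finset (ℕ × ℕ)) : Finset (ℕ × ℕ) :=
  I.image (fun p => (p.1, p.2 + 1))

namespace GA

lemma getD_eq {s : List ℕ} {i : ℕ} (h : i < s.length) : s.getD i 0 = s[i] :=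
  List.getD_eq_getElem s 0 h

def CS (M : Finset (ℕ × ℕ)) (R : Finset ℕ) (s : List ℕ) : Prop :=
  s ≠ [] ∧
  (s.getD 0 0 ∈ R ∧ ∀ m ∈ R, s.getD 0 0 ≤ m) ∧
  (∀ j ∈ R, (s.getD (s.length - 1) 0, j) ∉ M) ∧
  (∀ i, i + 1 < s.length →
    s.getD (i+1) 0 ∈ R ∧ (s.getD i 0, s.getD (i+1) 0) ∈ M ∧
      ∀ j' ∈ R, (s.getD i 0, j') ∈ M → s.getD (i+1) 0 ≤ j')

lemma isCharSeq_iff_CS {M : Finset (ℕ × ℕ)} {R : Finset ℕ} {s : List ℕ} :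
    IsCharSeq M R s ↔ CS M R s := by
  unfold IsCharSeq CS
  constructor
  · rintro ⟨⟨hne, ⟨hh1, hh2⟩, hlast⟩, hch⟩
    have hlen : 0 < s.length := List.length_pos_iff.2 hne
    rw [List.head_eq_getElem] at hh1 hh2
    rw [List.getLast_eq_getElem] at hlast
    rw [List.Chain', List.isChain_iff_getElem] at hch
    refine ⟨hne, ⟨by rwa [getD_eq hlen], fun m hm => by rw [getD_eq hlen]; exact hh2 m hm⟩,
      fun j hj => by rw [getD_eq (by omega)]; exact hlast j hj, fun i hi => ?_⟩
    have h := hch i (by omega)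
    rw [getD_eq hi, getD_eq (by omega)]
    exact h
  · rintro ⟨hne, ⟨hh1, hh2⟩, hlast, hstep⟩
    have hlen : 0 < s.length := List.length_pos_iff.2 hne
    refine ⟨⟨hne, ⟨?_, ?_⟩, ?_⟩, ?_⟩
    · rw [List.head_eq_getElem, ← getD_eq hlen]; exact hh1
    · intro m hm; rw [List.head_eq_getElem, ← getD_eq hlen]; exact hh2 m hm
    · intro j hj; rw [List.getLast_eq_getElem, ← getD_eq (by omega : s.length - 1 < s.length)]
      exact hlast j hj
    · rw [List.Chain', List.isChain_iff_getElem]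
      intro i hi
      have h := hstep i (by omega)
      rw [getD_eq (by omega), getD_eq (by omega)] at h
      exact h

section CSlemmas

variable {M : Finset (ℕ × ℕ)} {R : Finset ℕ} {s : List ℕ}
variable (hMlt : ∀ p ∈ M, p.1 < p.2)

lemma CS.ne (h : CS M R s) : s ≠ [] := h.1

lemma CS.mem_R (h : CS M R s) {x : ℕ} (hx : x ∈ s) : x ∈ R := by
  rw [List.mem_iff_getElem] at hx
  obtain ⟨i, hi, rfl⟩ := hx
  rcases Nat.eq_zero_or_pos i with rfl | hpos
  · rw [← getD_eq hi]; exact h.2.1.1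
  · obtain ⟨j, rfl⟩ : ∃ j, i = j + 1 := ⟨i - 1, by omega⟩
    rw [← getD_eq hi]
    exact (h.2.2.2 j (by omega)).1

include hMlt in
lemma CS.lt (h : CS M R s) {i : ℕ} (hi : i + 1 < s.length) :
    s.getD i 0 < s.getD (i+1) 0 :=
  hMlt _ (h.2.2.2 i hi).2.1

include hMlt in
lemma CS.nodup (h : CS M R s) : s.Nodup := by
  have : s.Chain' (· < ·) := by
    rw [List.Chain', List.isChain_iff_getElem]
    intro i hi
    have := h.lt hMlt (i := i) (by omega)
    rwa [getD_eq (by omega), getD_eq (by omega)] at this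
  exact (List.isChain_iff_pairwise.1 this).imp (fun h => Nat.ne_of_lt h)

lemma CS.unique (h1 : CS M R s) {t : List ℕ} (h2 : CS M R t) : s = t := by
  have hkey : ∀ i, i < s.length → i < t.length → s.getD i 0 = t.getD i 0 := by
    intro i
    induction i with
    | zero =>
      intro _ _
      exact le_antisymm (h1.2.1.2 _ h2.2.1.1) (h2.2.1.2 _ h1.2.1.1)
    | succ i ih =>
      intro hi hi'
      have heq := ih (by omega) (by omega)
      have hs := h1.2.2.2 i hi
      have ht := h2.2.2.2 i hi'
      rw [heq] at hs
      exact le_antisymm (hs.2.2 _ ht.1 ht.2.1) (ht.2.2 _ hs.1 hs.2.1)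
  have hlen : s.length = t.length := by
    by_contra hne
    rcases Nat.lt_or_ge s.length t.length with hlt | hge
    · have h0 : 0 < s.length := List.length_pos_iff.2 h1.1
      have hst := h2.2.2.2 (s.length - 1) (by omega)
      have hlast := h1.2.2.1 _ hst.1
      rw [← hkey (s.length - 1) (by omega) (by omega)] at hst
      exact hlast hst.2.1
    · have hlt : t.length < s.length := by omega
      have h0 : 0 < t.length := List.length_pos_iff.2 h2.1
      have hst := h1.2.2.2 (t.length - 1) (by omega)
      have hlast := h2.2.2.1 _ hst.1
      rw [hkey (t.length - 1) (by omega) (by omega)] at hst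
      exact hlast hst.2.1
  refine List.ext_getElem hlen (fun i hi hi' => ?_)
  rw [← getD_eq hi, ← getD_eq hi']
  exact hkey i hi hi'

lemma mem_of_getD {i : ℕ} (hi : i < s.length) : s.getD i 0 ∈ s := by
  rw [getD_eq hi]; exact List.getElem_mem _

lemma exists_getD_of_mem {x : ℕ} (hx : x ∈ s) : ∃ i, i < s.length ∧ s.getD i 0 = x := by
  rw [List.mem_iff_getElem] at hx
  obtain ⟨i, hi, rfl⟩ := hx
  exact ⟨i, hi, getD_eq hi⟩

include hMlt in
lemma CS.getD_inj (h : CS M R s) {i j : ℕ} (hi : i < s.length) (hj : j < s.length)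
    (hij : s.getD i 0 = s.getD j 0) : i = j := by
  have hnd := h.nodup hMlt
  rw [getD_eq hi, getD_eq hj] at hij
  exact (List.Nodup.getElem_inj_iff hnd).1 hij

end CSlemmas


def RunOK (n : ℕ) (M : Finset (ℕ × ℕ)) (L : List (List ℕ)) (R : ℕ → Finset ℕ) : Prop :=
  R 0 = Finset.Icc 1 (n + 1) ∧ R L.length = ∅ ∧
    ∀ k < L.length, CS M (R k) (L.getD k []) ∧ R (k + 1) = R k \ (L.getD k []).toFinset

lemma isCharSeqList_iff {n : ℕ} {M : Finset (ℕ × ℕ)} {L : List (List ℕ)} :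
    IsCharSeqList n M L ↔ ∃ R, RunOK n M L R := by
  unfold IsCharSeqList RunOK
  constructor
  · rintro ⟨R, h1, h2, h3⟩
    exact ⟨R, h1, h2, fun k hk => ⟨isCharSeq_iff_CS.1 (h3 k hk).1, (h3 k hk).2⟩⟩
  · rintro ⟨R, h1, h2, h3⟩
    exact ⟨R, h1, h2, fun k hk => ⟨isCharSeq_iff_CS.2 (h3 k hk).1, (h3 k hk).2⟩⟩

section RunLemmas

variable {n : ℕ} {M : Finset (ℕ × ℕ)} {L : List (List ℕ)} {R : ℕ → Finset ℕ}

lemma RunOK.mono (h : RunOK n M L R) {j k : ℕ} (hjk : j ≤ k) (hk : k ≤ L.length) :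
    R k ⊆ R j := by
  induction k with
  | zero => cases Nat.le_zero.1 hjk; exact subset_rfl
  | succ k ih =>
    rcases Nat.lt_or_ge j (k+1) with hj | hj
    · have hsub : R (k+1) ⊆ R k := by
        rw [(h.2.2 k (by omega)).2]; exact Finset.sdiff_subset
      exact hsub.trans (ih (by omega) (by omega))
    · cases le_antisymm hj hjk; exact subset_rfl

lemma RunOK.chain_sub (h : RunOK n M L R) {k : ℕ} (hk : k < L.length) {x : ℕ}
    (hx : x ∈ L.getD k []) : x ∈ R k :=
  (h.2.2 k hk).1.mem_R hx

lemma RunOK.consumed (h : RunOK n M L R) {k k' : ℕ} (hk : k < L.length) {x : ℕ}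
    (hx : x ∈ L.getD k []) (hkk' : k < k') (hk' : k' ≤ L.length) : x ∉ R k' := by
  intro hmem
  have h1 : R k' ⊆ R (k+1) := h.mono (by omega) hk'
  have h2 : R (k+1) = R k \ (L.getD k []).toFinset := (h.2.2 k hk).2
  have := h1 hmem
  rw [h2, Finset.mem_sdiff, List.mem_toFinset] at this
  exact this.2 hx

lemma RunOK.exists_chain (h : RunOK n M L R) {j k : ℕ} {x : ℕ} (hx : x ∈ R j)
    (hx' : x ∉ R k) (hjk : j ≤ k) (hk : k ≤ L.length) :
    ∃ k', j ≤ k' ∧ k' < k ∧ x ∈ L.getD k' [] := by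
  induction k with
  | zero => cases Nat.le_zero.1 hjk; exact absurd hx hx'
  | succ k ih =>
    rcases Nat.lt_or_ge j (k+1) with hj | hj
    · by_cases hmem : x ∈ R k
      · refine ⟨k, by omega, by omega, ?_⟩
        have h2 : R (k+1) = R k \ (L.getD k []).toFinset := (h.2.2 k (by omega)).2
        by_contra hc
        exact hx' (h2 ▸ Finset.mem_sdiff.2 ⟨hmem, fun hc' => hc (List.mem_toFinset.1 hc')⟩)
      · obtain ⟨k', h1, h2, h3⟩ := ih hmem (by omega) (by omega)
        exact ⟨k', h1, by omega, h3⟩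
    · cases le_antisymm hj hjk; exact absurd hx hx'

lemma RunOK.covering (h : RunOK n M L R) {x : ℕ} (hx : x ∈ Finset.Icc 1 (n+1)) :
    ∃ k, k < L.length ∧ x ∈ L.getD k [] := by
  obtain ⟨k', h1, h2, h3⟩ := h.exists_chain (h.1 ▸ hx) (h.2.1 ▸ Finset.notMem_empty x)
    (Nat.zero_le _) le_rfl
  exact ⟨k', h2, h3⟩

lemma RunOK.disj (h : RunOK n M L R) {k k' : ℕ} (hk : k < L.length) (hk' : k' < L.length)
    (hne : k ≠ k') {x : ℕ} (hx : x ∈ L.getD k []) (hx' : x ∈ L.getD k' []) : False := by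
  rcases Nat.lt_or_ge k k' with hlt | hge
  · exact h.consumed hk hx hlt (by omega) (h.chain_sub hk' hx')
  · exact h.consumed hk' hx' (by omega) (by omega) (h.chain_sub hk hx)

lemma RunOK.unique {L2 : List (List ℕ)} {R2 : ℕ → Finset ℕ} (h : RunOK n M L R)
    (h2 : RunOK n M L2 R2) : L = L2 := by
  have hkey : ∀ k, k ≤ L.length → k ≤ L2.length → R k = R2 k := by
    intro k
    induction k with
    | zero => intro _ _; rw [h.1, h2.1]
    | succ k ih =>
      intro hk hk2
      have hR := ih (by omega) (by omega)
      have hc1 := (h.2.2 k (by omega)).1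
      have hc2 := (h2.2.2 k (by omega)).1
      rw [hR] at hc1
      have := hc1.unique hc2
      rw [(h.2.2 k (by omega)).2, (h2.2.2 k (by omega)).2, hR, this]
  have hlen : L.length = L2.length := by
    by_contra hne
    rcases Nat.lt_or_ge L.length L2.length with hlt | hge
    · have hc2 := (h2.2.2 L.length hlt).1
      have : R2 L.length = ∅ := by rw [← hkey L.length le_rfl (by omega), h.2.1]
      have hh := hc2.2.1.1
      rw [this] at hh
      exact absurd hh (Finset.notMem_empty _)
    · have hlt : L2.length < L.length := by omega
      have hc1 := (h.2.2 L2.length hlt).1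
      have : R L2.length = ∅ := by rw [hkey L2.length (by omega) le_rfl, h2.2.1]
      have hh := hc1.2.1.1
      rw [this] at hh
      exact absurd hh (Finset.notMem_empty _)
  refine List.ext_getElem hlen (fun k hk hk2 => ?_)
  have hR := hkey k (by omega) (by omega)
  have hc1 := (h.2.2 k hk).1
  have hc2 := (h2.2.2 k hk2).1
  rw [hR] at hc1
  have := hc1.unique hc2
  rwa [List.getD_eq_getElem _ _ hk, List.getD_eq_getElem _ _ hk2] at this

end RunLemmas


section Ideal

variable {n : ℕ} {I : Finset (ℕ × ℕ)} (hI : IsIdealA n I) {a b : ℕ}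
  (hp : (a, b) ∈ minRootsA I)

lemma mem_toM {x j : ℕ} : (x, j) ∈ toMatrixIdeal I ↔ ∃ y, (x, y) ∈ I ∧ j = y + 1 := by
  unfold toMatrixIdeal
  simp only [Finset.mem_image, Prod.mk.injEq, Prod.exists]
  constructor
  · rintro ⟨u, v, huv, rfl, rfl⟩; exact ⟨v, huv, rfl⟩
  · rintro ⟨y, hy, rfl⟩; exact ⟨x, y, hy, rfl, rfl⟩

lemma mem_minRoots {q : ℕ × ℕ} :
    q ∈ minRootsA I ↔ q ∈ I ∧ ∀ r ∈ I, q.1 ≤ r.1 → r.2 ≤ q.2 → r = q := by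
  unfold minRootsA; simp [Finset.mem_filter]

include hp in
lemma hp_I : (a, b) ∈ I := (mem_minRoots.1 hp).1

include hI hp in
lemma hab : 1 ≤ a ∧ a ≤ b ∧ b ≤ n := hI.1 _ (hp_I hp)

include hI in
lemma M_bounds {x j : ℕ} (h : (x, j) ∈ toMatrixIdeal I) : 1 ≤ x ∧ x < j ∧ j ≤ n + 1 := by
  obtain ⟨y, hy, rfl⟩ := mem_toM.1 h
  have := hI.1 _ hy
  omega

include hI in
lemma M_lt : ∀ q ∈ toMatrixIdeal I, q.1 < q.2 := by
  rintro ⟨x, j⟩ hq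
  exact (M_bounds hI hq).2.1

include hI in
lemma M_up {x j x' j' : ℕ} (h : (x, j) ∈ toMatrixIdeal I) (h1 : 1 ≤ x') (h2 : x' ≤ x)
    (h3 : j ≤ j') (h4 : j' ≤ n + 1) : (x', j') ∈ toMatrixIdeal I := by
  obtain ⟨y, hy, rfl⟩ := mem_toM.1 h
  exact mem_toM.2 ⟨j' - 1, hI.2 _ hy (x', j' - 1) h1 h2 (by omega) (by omega), by omega⟩

include hp in
lemma M_ac : (a, b + 1) ∈ toMatrixIdeal I :=
  mem_toM.2 ⟨b, hp_I hp, rfl⟩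

include hp in
lemma M_corner {x j : ℕ} (h : (x, j) ∈ toMatrixIdeal I) (h1 : a ≤ x) (h2 : j ≤ b + 1) :
    x = a ∧ j = b + 1 := by
  obtain ⟨y, hy, rfl⟩ := mem_toM.1 h
  have := (mem_minRoots.1 hp).2 (x, y) hy h1 (by omega)
  rw [Prod.ext_iff] at this
  exact ⟨this.1, by omega⟩

section Rcase

variable (hcn : b + 1 ≤ n) (hst : KStable I (b + 1))

include hI hp hcn hst in
lemma M5 {x : ℕ} (h : (x, b + 2) ∈ toMatrixIdeal I) :
    (x, b + 1) ∈ toMatrixIdeal I ∧ x ≤ a := by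
  obtain ⟨y, hy, hy1⟩ := mem_toM.1 h
  have hy' : y = b + 1 := by omega
  subst hy'
  obtain ⟨hx1, hx2, hx3⟩ := hI.1 _ hy
  have hxb : (x, b) ∈ I := by
    by_contra hxb
    set P : ℕ → Prop := fun x' => (x', b + 1) ∈ I with hP
    have hxn : x ≤ n := by have := hI.1 _ hy; omega
    set xs := Nat.findGreatest P n with hxs
    have hspec : P xs := Nat.findGreatest_spec hxn hy
    have hxle : x ≤ xs := Nat.le_findGreatest hxn hy
    have hmin : (xs, b + 1) ∈ minRootsA I := by
      rw [mem_minRoots]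
      refine ⟨hspec, ?_⟩
      rintro ⟨u, v⟩ huv h1 h2
      simp only at h1 h2 ⊢
      have hub : (u, b + 1) ∈ I := hI.2 _ huv (u, b + 1) (by have := hI.1 _ huv; omega)
        le_rfl h2 hcn
      have huxs : u ≤ xs := by
        by_contra hc
        have hun : u ≤ n := by have := hI.1 _ hub; omega
        exact Nat.findGreatest_is_greatest (P := P) (show xs < u by omega) hun hub
      have hu : u = xs := le_antisymm huxs h1
      have hv : v = b + 1 := by
        by_contra hc
        exact hxb (hI.2 _ huv (x, b) (by omega) (by omega) (by omega) (by omega))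
      simp [hu, hv]
    exact absurd rfl (hst _ hmin).2
  exact ⟨mem_toM.2 ⟨b, hxb, rfl⟩, by
    by_cases hax : a ≤ x
    · exact le_of_eq (M_corner hp (mem_toM.2 ⟨b, hxb, rfl⟩) hax le_rfl).1
    · omega⟩

include hI hp hcn hst in
lemma M6 {j : ℕ} (h : (b + 1, j) ∈ toMatrixIdeal I) : (b + 2, j) ∈ toMatrixIdeal I := by
  obtain ⟨y, hy, rfl⟩ := mem_toM.1 h
  refine mem_toM.2 ⟨y, ?_, rfl⟩
  by_contra hgoal
  set P : ℕ → Prop := fun y' => (b + 1, y') ∈ I with hP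
  have hex : ∃ y', P y' := ⟨y, hy⟩
  set ys := Nat.find hex with hys
  have hspec : P ys := Nat.find_spec hex
  have hysy : ys ≤ y := Nat.find_min' hex hy
  have hyn : y ≤ n := (hI.1 _ hy).2.2
  have hmin : (b + 1, ys) ∈ minRootsA I := by
    rw [mem_minRoots]
    refine ⟨hspec, ?_⟩
    rintro ⟨u, v⟩ huv h1 h2
    simp only at h1 h2 ⊢
    have hbv : (b + 1, v) ∈ I := hI.2 _ huv (b + 1, v) (by omega) h1 le_rfl
      (by have := hI.1 _ huv; omega)
    have hvy : ys ≤ v := Nat.find_min' hex hbv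
    have hv : v = ys := le_antisymm h2 hvy
    have hu : u = b + 1 := by
      by_contra hc
      have hu2 : b + 2 ≤ u := by omega
      have : (b + 2, ys) ∈ I := hI.2 _ huv (b + 2, ys) (by omega) hu2 (by omega)
        (by have := hI.1 _ hspec; omega)
      exact hgoal (hI.2 _ this (b + 2, y) (by omega) le_rfl (by omega) hyn)
    simp [hu, hv]
  exact absurd rfl (hst _ hmin).1

end Rcase

section Lcase

variable (ha2 : 2 ≤ a) (hst : KStable I (a - 1))

include hI hp ha2 hst in
lemma M7 {j : ℕ} (h : (a - 1, j) ∈ toMatrixIdeal I) : b + 1 ≤ j := by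
  obtain ⟨y, hy, rfl⟩ := mem_toM.1 h
  by_contra hc
  have hyb : y ≤ b - 1 := by
    have := hab hI hp
    omega
  set P : ℕ → Prop := fun y' => (a - 1, y') ∈ I with hP
  have hex : ∃ y', P y' := ⟨y, hy⟩
  set ys := Nat.find hex with hys
  have hspec : P ys := Nat.find_spec hex
  have hysy : ys ≤ y := Nat.find_min' hex hy
  have habI := hab hI hp
  have hmin : (a - 1, ys) ∈ minRootsA I := by
    rw [mem_minRoots]
    refine ⟨hspec, ?_⟩
    rintro ⟨u, v⟩ huv h1 h2
    simp only at h1 h2 ⊢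
    have hbv : (a - 1, v) ∈ I := hI.2 _ huv (a - 1, v) (by omega) h1 le_rfl
      (by have := hI.1 _ huv; omega)
    have hv : v = ys := le_antisymm h2 (Nat.find_min' hex hbv)
    have hu : u = a - 1 := by
      by_contra hc'
      have hua : a ≤ u := by omega
      have := (mem_minRoots.1 hp).2 (u, v) huv hua (by omega)
      rw [Prod.ext_iff] at this
      simp only at this
      omega
    simp [hu, hv]
  exact absurd rfl (hst _ hmin).1

include hI hp ha2 in
lemma M7b : (a - 1, b + 1) ∈ toMatrixIdeal I := by
  have habI := hab hI hp
  exact mem_toM.2 ⟨b, hI.2 _ (hp_I hp) (a - 1, b) (by omega) (by omega) le_rfl habI.2.2, rfl⟩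

include hI hp ha2 hst in
lemma M8 {x : ℕ} (h : (x, a) ∈ toMatrixIdeal I) : (x, a - 1) ∈ toMatrixIdeal I := by
  obtain ⟨y, hy, hy1⟩ := mem_toM.1 h
  have hy' : y = a - 1 := by omega
  subst hy'
  have habI := hab hI hp
  obtain ⟨hx1, hx2, hx3⟩ := hI.1 _ hy
  refine mem_toM.2 ⟨a - 2, ?_, by omega⟩
  by_contra hgoal
  set P : ℕ → Prop := fun x' => (x', a - 1) ∈ I with hP
  have hxn : x ≤ n := by have := hI.1 _ hy; omega
  set xs := Nat.findGreatest P n with hxs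
  have hspec : P xs := Nat.findGreatest_spec hxn hy
  have hxle : x ≤ xs := Nat.le_findGreatest hxn hy
  have hmin : (xs, a - 1) ∈ minRootsA I := by
    rw [mem_minRoots]
    refine ⟨hspec, ?_⟩
    rintro ⟨u, v⟩ huv h1 h2
    simp only at h1 h2 ⊢
    have hub : (u, a - 1) ∈ I := hI.2 _ huv (u, a - 1) (by have := hI.1 _ huv; omega)
      le_rfl h2 (by omega)
    have huxs : u ≤ xs := by
      by_contra hc
      have hun : u ≤ n := by have := hI.1 _ hub; omega
      exact Nat.findGreatest_is_greatest (P := P) (show xs < u by omega) hun hub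
    have hu : u = xs := le_antisymm huxs h1
    have hv : v = a - 1 := by
      by_contra hc
      exact hgoal (hI.2 _ huv (x, a - 2) (by omega) (by omega) (by omega) (by omega))
    simp [hu, hv]
  exact absurd rfl (hst _ hmin).2

end Lcase

end Ideal


section Main

variable {n : ℕ} {I : Finset (ℕ × ℕ)} {M M' : Finset (ℕ × ℕ)} {a b : ℕ}
  {L : List (List ℕ)} {R : ℕ → Finset ℕ}

lemma set_getD {s : List ℕ} {j m v : ℕ} (hm : m < s.length) :
    (s.set j v).getD m 0 = if j = m then v else s.getD m 0 := by
  rw [getD_eq (by simpa using hm), List.getElem_set, getD_eq hm]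

section EQ

variable (hM : M = toMatrixIdeal I) (hM'mem : ∀ q : ℕ × ℕ, q ∈ M' ↔ q ∈ M ∧ q ≠ (a, b + 1))

include hM'mem in
lemma eq_case (hrun : RunOK n M L R)
    (hnot : ∀ k, k < L.length → ∀ i, i + 1 < (L.getD k []).length →
      ¬((L.getD k []).getD i 0 = a ∧ (L.getD k []).getD (i+1) 0 = b + 1)) :
    RunOK n M' L R := by
  refine ⟨hrun.1, hrun.2.1, fun k hk => ⟨?_, (hrun.2.2 k hk).2⟩⟩
  obtain ⟨hne, hhead, hstop, hstep⟩ := (hrun.2.2 k hk).1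
  refine ⟨hne, hhead, ?_, ?_⟩
  · intro j hj hmem
    exact hstop j hj ((hM'mem _).1 hmem).1
  · intro i hi
    obtain ⟨h1, h2, h3⟩ := hstep i hi
    refine ⟨h1, (hM'mem _).2 ⟨h2, ?_⟩, fun j' hj' hmem => h3 j' hj' ((hM'mem _).1 hmem).1⟩
    intro hc
    rw [Prod.ext_iff] at hc
    exact hnot k hk i hi ⟨hc.1, hc.2⟩

end EQ

section K1sec

variable (hI : IsIdealA n I) (hp : (a, b) ∈ minRootsA I) (hcn : b + 1 ≤ n)
  (hst : KStable I (b + 1)) (hM : M = toMatrixIdeal I)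

include hI hp hcn hst hM in
lemma K1step {R0 : Finset ℕ} {s : List ℕ} (hcs : CS M R0 s) (hc : b + 1 ∈ R0) :
    b + 2 ∉ s := by
  intro hmem
  obtain ⟨m, hm, hmv⟩ := exists_getD_of_mem hmem
  rcases Nat.eq_zero_or_pos m with rfl | hpos
  · have := hcs.2.1.2 (b + 1) hc
    omega
  · obtain ⟨m', rfl⟩ : ∃ m', m = m' + 1 := ⟨m - 1, by omega⟩
    obtain ⟨_, h2, h3⟩ := hcs.2.2.2 m' hm
    rw [hmv] at h2
    have h5 := (M5 hI hp hcn hst (hM ▸ h2)).1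
    have := h3 (b + 1) hc (hM ▸ h5)
    omega

include hI hp hcn hst hM in
lemma K1 (hrun : RunOK n M L R) : ∀ k, k ≤ L.length → b + 1 ∈ R k → b + 2 ∈ R k := by
  intro k
  induction k with
  | zero =>
    intro _ hmem
    rw [hrun.1] at hmem ⊢
    rw [Finset.mem_Icc] at hmem ⊢
    omega
  | succ k ih =>
    intro hk hmem
    have hrec := (hrun.2.2 k (by omega)).2
    rw [hrec, Finset.mem_sdiff] at hmem ⊢
    refine ⟨ih (by omega) hmem.1, fun hc => ?_⟩
    exact K1step hI hp hcn hst hM (hrun.2.2 k (by omega)).1 hmem.1 (List.mem_toFinset.1 hc)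

end K1sec

section LCASE

variable (hI : IsIdealA n I) (hp : (a, b) ∈ minRootsA I) (ha2 : 2 ≤ a)
  (hst : KStable I (a - 1)) (hM : M = toMatrixIdeal I)

include hI hp ha2 hst hM in
lemma l_case (hrun : RunOK n M L R)
    (HA : ∃ k, k < L.length ∧ ∃ i, i + 1 < (L.getD k []).length ∧
      (L.getD k []).getD i 0 = a ∧ (L.getD k []).getD (i+1) 0 = b + 1) : False := by
  obtain ⟨k, hk, i, hi, hia, hic⟩ := HA
  have habI := hab hI hp
  set s := L.getD k [] with hs
  have hcs : CS M (R k) s := (hrun.2.2 k hk).1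
  have hcmem : b + 1 ∈ s := by
    have := mem_of_getD (s := s) (by omega : i + 1 < s.length)
    rwa [hic] at this
  have hcRk : b + 1 ∈ R k := hrun.chain_sub hk hcmem
  have ha1n : a - 1 ∉ R k := by
    intro hmem
    rcases Nat.eq_zero_or_pos i with rfl | hpos
    · have := hcs.2.1.2 (a - 1) hmem
      omega
    · obtain ⟨i', rfl⟩ : ∃ i', i = i' + 1 := ⟨i - 1, by omega⟩
      obtain ⟨_, h2, h3⟩ := hcs.2.2.2 i' (by omega)
      rw [hia] at h2
      have h8 := M8 hI hp ha2 hst (hM ▸ h2)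
      have := h3 (a - 1) hmem (hM ▸ h8)
      omega
  have ha1R0 : a - 1 ∈ R 0 := by
    rw [hrun.1, Finset.mem_Icc]; omega
  obtain ⟨k', _, hk'lt, hmem⟩ := hrun.exists_chain ha1R0 ha1n (Nat.zero_le _) (by omega)
  set t := L.getD k' [] with ht
  obtain ⟨m, hm, hmv⟩ := exists_getD_of_mem hmem
  have hcRk' : b + 1 ∈ R k' := hrun.mono (by omega) (by omega) hcRk
  have hct : CS M (R k') t := (hrun.2.2 k' (by omega)).1
  by_cases hm1 : m + 1 < t.length
  · obtain ⟨h1, h2, h3⟩ := hct.2.2.2 m hm1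
    rw [hmv] at h2 h3
    have h7 := M7 hI hp ha2 hst (hM ▸ h2)
    have h7b := M7b hI hp ha2
    have hle := h3 (b + 1) hcRk' (hM ▸ h7b)
    have heq : t.getD (m+1) 0 = b + 1 := by omega
    have : b + 1 ∈ t := by
      have := mem_of_getD (s := t) hm1
      rwa [heq] at this
    exact hrun.consumed (by omega) this hk'lt (by omega) hcRk
  · have hlast : m = t.length - 1 := by omega
    have := hct.2.2.1 (b + 1) hcRk'
    rw [← hlast, hmv] at this
    exact this (hM ▸ M7b hI hp ha2)

end LCASE

end Main


variable {n : ℕ} {I : Finset (ℕ × ℕ)} {M' : Finset (ℕ × ℕ)} {a b : ℕ}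
  {L : List (List ℕ)} {R : ℕ → Finset ℕ}

lemma r_case (hI : IsIdealA n I) (hp : (a, b) ∈ minRootsA I) (hcn : b + 1 ≤ n)
    (hst : KStable I (b + 1))
    (hM'mem : ∀ q : ℕ × ℕ, q ∈ M' ↔ q ∈ toMatrixIdeal I ∧ q ≠ (a, b + 1))
    (hrun : RunOK n (toMatrixIdeal I) L R)
    (HA : ∃ k, k < L.length ∧ ∃ i, i + 1 < (L.getD k []).length ∧
      (L.getD k []).getD i 0 = a ∧ (L.getD k []).getD (i+1) 0 = b + 1) :
    ∃ L'' R'', RunOK n M' L'' R'' ∧ L''.map List.length = L.map List.length := by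
  set M := toMatrixIdeal I with hMdef
  have habI := hab hI hp
  have hMlt : ∀ q ∈ M, q.1 < q.2 := M_lt hI
  have hMb : ∀ {x j : ℕ}, (x, j) ∈ M → 1 ≤ x ∧ x < j ∧ j ≤ n + 1 := fun h => M_bounds hI h
  have hM'sub : ∀ q ∈ M', q ∈ M := fun q h => ((hM'mem q).1 h).1
  have hM'of : ∀ {x j : ℕ}, (x, j) ∈ M → ¬(x = a ∧ j = b + 1) → (x, j) ∈ M' := by
    intro x j h1 h2
    exact (hM'mem _).2 ⟨h1, fun hc => h2 (by rw [Prod.ext_iff] at hc; exact hc)⟩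
  have hup : ∀ {z j j' : ℕ}, (z, j) ∈ M → j ≤ j' → j' ≤ n + 1 → (z, j') ∈ M := by
    intro z j j' h h1 h2
    exact M_up hI h (hMb h).1 le_rfl h1 h2
  have hdown : ∀ {j : ℕ}, (b + 2, j) ∈ M → (b + 1, j) ∈ M := by
    intro j h
    exact M_up hI h (by omega) (by omega) le_rfl (hMb h).2.2
  have hM6 : ∀ {j : ℕ}, (b + 1, j) ∈ M → (b + 2, j) ∈ M := fun h => M6 hI hp hcn hst h
  have hM5 : ∀ {y : ℕ}, (y, b + 2) ∈ M → (y, b + 1) ∈ M ∧ y ≤ a :=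
    fun h => M5 hI hp hcn hst h
  -- unpack HA
  obtain ⟨i1, hi1, j0, hj0, hja, hjc⟩ := HA
  set s1 := L.getD i1 [] with hs1def
  have hcs1 : CS M (R i1) s1 := (hrun.2.2 i1 hi1).1
  have hlen1 : 0 < s1.length := List.length_pos_iff.2 hcs1.1
  have hnd1 : s1.Nodup := hcs1.nodup hMlt
  have hc_s1 : b + 1 ∈ s1 := by have := mem_of_getD (s := s1) (by omega : j0 + 1 < s1.length); rwa [hjc] at this
  have ha_s1 : a ∈ s1 := by have := mem_of_getD (s := s1) (by omega : j0 < s1.length); rwa [hja] at this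
  have hcR1 : b + 1 ∈ R i1 := hrun.chain_sub hi1 hc_s1
  have hc2R1 : b + 2 ∈ R i1 := K1 hI hp hcn hst rfl hrun i1 (by omega) hcR1
  have hc2ns1 : b + 2 ∉ s1 := K1step hI hp hcn hst rfl hcs1 hcR1
  -- find i2
  obtain ⟨i2, hi2, hc2s2⟩ := hrun.covering (x := b + 2) (by rw [Finset.mem_Icc]; omega)
  set s2 := L.getD i2 [] with hs2def
  have hne12 : i1 ≠ i2 := fun h => hc2ns1 (by rw [hs1def, h, ← hs2def]; exact hc2s2)
  have hi12 : i1 < i2 := by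
    rcases Nat.lt_or_ge i1 i2 with h | h
    · exact h
    · exact absurd (hrun.consumed hi2 hc2s2 (by omega) (by omega) hc2R1) (by simp)
  have hcs2 : CS M (R i2) s2 := (hrun.2.2 i2 hi2).1
  have hlen2 : 0 < s2.length := List.length_pos_iff.2 hcs2.1
  have hnd2 : s2.Nodup := hcs2.nodup hMlt
  obtain ⟨j2, hj2, hj2v⟩ := exists_getD_of_mem hc2s2
  have hc2R2 : b + 2 ∈ R i2 := hrun.chain_sub hi2 hc2s2
  have hcnotR : ∀ k, i1 < k → k ≤ L.length → b + 1 ∉ R k :=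
    fun k h1 h2 => hrun.consumed hi1 hc_s1 h1 h2
  have hcnotR2 : b + 1 ∉ R i2 := hcnotR i2 hi12 (by omega)
  have ha_ne : ∀ {y : ℕ}, y ∈ s2 → y ≠ a :=
    fun hy hc => hrun.disj hi2 hi1 (Ne.symm hne12) hy (hc ▸ ha_s1)
  -- the corner minimality in M'
  have hcornerM' : ∀ {j : ℕ}, (a, j) ∈ M' → b + 2 ≤ j := by
    intro j h
    have hMj := hM'sub _ h
    rcases Nat.lt_or_ge j (b + 2) with hlt | hge
    · have := M_corner hp hMj le_rfl (by omega)
      have hne := ((hM'mem _).1 h).2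
      exact absurd (by rw [this.1, this.2]) hne
    · exact hge
  have hacM' : (a, b + 2) ∈ M' :=
    hM'of (hup (M_ac hp) (by omega) (by omega)) (by omega)
  -- definitions
  set s1' := s1.set (j0 + 1) (b + 2) with hs1'def
  set s2' := s2.set j2 (b + 1) with hs2'def
  set L'' := (L.set i1 s1').set i2 s2' with hL''def
  set Rf : ℕ → Finset ℕ :=
    fun k => if k ≤ i1 then R k else if k ≤ i2 then insert (b + 1) ((R k).erase (b + 2)) else R k
    with hRfdef
  have hlenL'' : L''.length = L.length := by simp [hL''def]
  have hgetD : ∀ k, k < L.length →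
      L''.getD k [] = if i2 = k then s2' else if i1 = k then s1' else L.getD k [] := by
    intro k hk
    have h1 : k < L''.length := by omega
    rw [List.getD_eq_getElem _ _ h1]
    simp only [hL''def, List.getElem_set]
    split_ifs with h h2
    · rfl
    · rfl
    · exact (List.getD_eq_getElem _ _ hk).symm
  -- membership characterizations for the modified chains
  have hmem_s1' : ∀ x, x ∈ s1' ↔ (x ∈ s1 ∧ x ≠ b + 1) ∨ x = b + 2 := by
    intro x
    constructor
    · intro hx
      obtain ⟨m, hm, hmv⟩ := exists_getD_of_mem hx
      rw [List.length_set] at hm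
      rw [hs1'def, set_getD hm] at hmv
      split_ifs at hmv with hsp
      · right; omega
      · left
        refine ⟨hmv ▸ mem_of_getD hm, fun hc => hsp ?_⟩
        exact (hcs1.getD_inj hMlt hm (by omega) (by rw [hmv, hc, hjc])).symm
    · rintro (⟨hx, hxne⟩ | rfl)
      · obtain ⟨m, hm, hmv⟩ := exists_getD_of_mem hx
        have hmne : j0 + 1 ≠ m := fun hc => hxne (by rw [← hmv, ← hc, hjc])
        have : s1'.getD m 0 = x := by rw [hs1'def, set_getD hm, if_neg hmne, hmv]
        exact this ▸ mem_of_getD (by rw [hs1'def, List.length_set]; exact hm)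
      · have : s1'.getD (j0 + 1) 0 = b + 2 := by
          rw [hs1'def, set_getD (by omega), if_pos rfl]
        exact this ▸ mem_of_getD (by rw [hs1'def, List.length_set]; omega)
  have hmem_s2' : ∀ x, x ∈ s2' ↔ (x ∈ s2 ∧ x ≠ b + 2) ∨ x = b + 1 := by
    intro x
    constructor
    · intro hx
      obtain ⟨m, hm, hmv⟩ := exists_getD_of_mem hx
      rw [List.length_set] at hm
      rw [hs2'def, set_getD hm] at hmv
      split_ifs at hmv with hsp
      · right; omega
      · left
        refine ⟨hmv ▸ mem_of_getD hm, fun hc => hsp ?_⟩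
        exact (hcs2.getD_inj hMlt hm hj2 (by rw [hmv, hc, hj2v])).symm
    · rintro (⟨hx, hxne⟩ | rfl)
      · obtain ⟨m, hm, hmv⟩ := exists_getD_of_mem hx
        have hmne : j2 ≠ m := fun hc => hxne (by rw [← hmv, ← hc, hj2v])
        have : s2'.getD m 0 = x := by rw [hs2'def, set_getD hm, if_neg hmne, hmv]
        exact this ▸ mem_of_getD (by rw [hs2'def, List.length_set]; exact hm)
      · have : s2'.getD j2 0 = b + 1 := by
          rw [hs2'def, set_getD hj2, if_pos rfl]
        exact this ▸ mem_of_getD (by rw [hs2'def, List.length_set]; exact hj2)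
  -- generic CS transfer for untouched chains
  have hCSother : ∀ k, k < L.length → k ≠ i1 → CS M' (R k) (L.getD k []) := by
    intro k hk hkne
    have hbnot : b + 1 ∉ L.getD k [] := fun hmem => hrun.disj hk hi1 hkne hmem hc_s1
    obtain ⟨hne, hhead, hstop, hstep⟩ := (hrun.2.2 k hk).1
    refine ⟨hne, hhead, fun j hj hm => hstop j hj (hM'sub _ hm), fun i hi => ?_⟩
    obtain ⟨h1, h2, h3⟩ := hstep i hi
    refine ⟨h1, hM'of h2 ?_, fun j' hj' hm => h3 j' hj' (hM'sub _ hm)⟩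
    rintro ⟨hc1, hc2⟩
    exact hbnot (hc2 ▸ mem_of_getD (by omega))
  refine ⟨L'', Rf, ⟨?_, ?_, ?_⟩, ?_⟩
  · simp only [hRfdef, if_pos (Nat.zero_le i1)]
    exact hrun.1
  · rw [hlenL'']
    simp only [hRfdef]
    rw [if_neg (by omega), if_neg (by omega)]
    exact hrun.2.1
  · intro k hk
    rw [hlenL''] at hk
    rw [hgetD k hk]
    rcases Nat.lt_trichotomy k i1 with hklt | hkeq | hkgt
    · -- k < i1
      rw [if_neg (by omega), if_neg (by omega)]
      simp only [hRfdef]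
      rw [if_pos (by omega : k ≤ i1), if_pos (by omega : k + 1 ≤ i1)]
      exact ⟨hCSother k hk (by omega), (hrun.2.2 k hk).2⟩
    · -- k = i1
      subst hkeq
      rw [if_neg (Ne.symm hne12), if_pos rfl]
      simp only [hRfdef]
      rw [if_pos le_rfl, if_neg (by omega : ¬ k + 1 ≤ k), if_pos (by omega : k + 1 ≤ i2)]
      constructor
      · -- CS M' (R i1) s1'
        obtain ⟨hne, ⟨hh1, hh2⟩, hstop, hstep⟩ := id hcs1
        have hlen1' : s1'.length = s1.length := by rw [hs1'def, List.length_set]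
        refine ⟨by rw [← List.length_pos_iff, hlen1']; omega, ⟨?_, ?_⟩, ?_, ?_⟩
        · rw [hs1'def, set_getD (m := 0) hlen1, if_neg (by omega)]; exact hh1
        · intro m hm; rw [hs1'def, set_getD (m := 0) hlen1, if_neg (by omega)]; exact hh2 m hm
        · -- stop
          intro j hj hmem
          rw [hlen1'] at hmem
          by_cases hl : j0 + 1 = s1.length - 1
          · rw [hs1'def, set_getD (m := s1.length - 1) (by omega), if_pos hl] at hmem
            have h2 := hdown (hM'sub _ hmem)
            have := hstop j hj
            rw [← hl, hjc] at this
            exact this h2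
          · rw [hs1'def, set_getD (m := s1.length - 1) (by omega), if_neg hl] at hmem
            exact hstop j hj (hM'sub _ hmem)
        · -- step
          intro i hi
          rw [hlen1'] at hi
          rcases Nat.lt_trichotomy (j0 + 1) (i + 1) with hc | hc | hc
          · -- pair strictly after position j0+1
            by_cases hij0 : i = j0 + 1
            · -- pair (b+2, e)
              subst hij0
              obtain ⟨h1, h2, h3⟩ := hstep (j0+1) hi
              rw [hjc] at h2 h3
              have h2' : (b + 2, s1.getD (j0+1+1) 0) ∈ M := hM6 h2
              refine ⟨?_, ?_, ?_⟩
              · rw [hs1'def, set_getD (m := j0+1+1) (by omega), if_neg (by omega)]; exact h1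
              · rw [hs1'def, set_getD (m := j0+1) (by omega), if_pos rfl,
                  set_getD (m := j0+1+1) (by omega), if_neg (by omega)]
                exact hM'of h2' (by omega)
              · intro j' hj' hm
                rw [hs1'def, set_getD (m := j0+1) (by omega), if_pos rfl] at hm
                rw [hs1'def, set_getD (m := j0+1+1) (by omega), if_neg (by omega)]
                have := h3 j' hj' (hdown (hM'sub _ hm))
                omega
            · -- untouched pair
              obtain ⟨h1, h2, h3⟩ := hstep i hi
              have hne1 : j0 + 1 ≠ i := fun h => hij0 h.symm
              have hne2 : j0 + 1 ≠ i + 1 := by omega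
              refine ⟨?_, ?_, ?_⟩
              · rw [hs1'def, set_getD (m := i+1) (by omega), if_neg hne2]; exact h1
              · rw [hs1'def, set_getD (m := i) (by omega), if_neg hne1,
                  set_getD (m := i+1) (by omega), if_neg hne2]
                refine hM'of h2 ?_
                rintro ⟨hca, hcc⟩
                exact hne2 ((hcs1.getD_inj hMlt (by omega) (by omega) (by rw [hjc, hcc])).symm)
              · intro j' hj' hm
                rw [hs1'def, set_getD (m := i) (by omega), if_neg hne1] at hm
                rw [hs1'def, set_getD (m := i+1) (by omega), if_neg hne2]
                exact h3 j' hj' (hM'sub _ hm)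
          · -- i + 1 = j0 + 1 : the pair (a, b+2)
            have hi0 : i = j0 := by omega
            refine ⟨?_, ?_, ?_⟩
            · rw [hs1'def, set_getD (m := i+1) (by omega), if_pos hc]; exact hc2R1
            · rw [hs1'def, set_getD (m := i) (by omega), if_neg (by omega),
                set_getD (m := i+1) (by omega), if_pos hc, hi0, hja]
              exact hacM'
            · intro j' hj' hm
              rw [hs1'def, set_getD (m := i) (by omega), if_neg (by omega), hi0, hja] at hm
              rw [hs1'def, set_getD (m := i+1) (by omega), if_pos hc]
              exact hcornerM' hm
          · -- pair strictly before j0+1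
            obtain ⟨h1, h2, h3⟩ := hstep i hi
            have hne1 : j0 + 1 ≠ i := by omega
            have hne2 : j0 + 1 ≠ i + 1 := by omega
            refine ⟨?_, ?_, ?_⟩
            · rw [hs1'def, set_getD (m := i+1) (by omega), if_neg hne2]; exact h1
            · rw [hs1'def, set_getD (m := i) (by omega), if_neg hne1,
                set_getD (m := i+1) (by omega), if_neg hne2]
              refine hM'of h2 ?_
              rintro ⟨hca, hcc⟩
              exact hne2 ((hcs1.getD_inj hMlt (by omega) (by omega) (by rw [hjc, hcc])).symm)
            · intro j' hj' hm
              rw [hs1'def, set_getD (m := i) (by omega), if_neg hne1] at hm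
              rw [hs1'def, set_getD (m := i+1) (by omega), if_neg hne2]
              exact h3 j' hj' (hM'sub _ hm)
      · -- recurrence at i1
        have hrec : R (k + 1) = R k \ s1.toFinset := (hrun.2.2 k hk).2
        ext x
        simp only [Finset.mem_insert, Finset.mem_erase, hrec, Finset.mem_sdiff,
          List.mem_toFinset, hmem_s1' x]
        constructor
        · rintro (rfl | ⟨h1, h2, h3⟩)
          · refine ⟨hcR1, fun hc => ?_⟩
            rcases hc with ⟨_, hne'⟩ | hc
            · exact hne' rfl
            · omega
          · refine ⟨h2, fun hc => ?_⟩
            rcases hc with ⟨hs, _⟩ | rfl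
            · exact h3 hs
            · exact h1 rfl
        · rintro ⟨hxR, hnot⟩
          by_cases hx : x = b + 1
          · exact Or.inl hx
          · exact Or.inr ⟨fun hc => hnot (Or.inr hc), hxR, fun hs => hnot (Or.inl ⟨hs, hx⟩)⟩
    · -- k > i1
      rcases Nat.lt_trichotomy k i2 with hk2 | hk2 | hk2
      · -- interim
        rw [if_neg (by omega), if_neg (by omega)]
        simp only [hRfdef]
        rw [if_neg (by omega), if_pos (by omega : k ≤ i2),
          if_neg (by omega), if_pos (by omega : k + 1 ≤ i2)]
        have hcnotk : b + 1 ∉ R k := hcnotR k (by omega) (by omega)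
        have hc2k : b + 2 ∈ R k := hrun.mono (by omega) (by omega) hc2R2
        have hc2notchain : b + 2 ∉ L.getD k [] :=
          fun hm => hrun.disj hk hi2 (by omega) hm hc2s2
        have hcnotchain : b + 1 ∉ L.getD k [] :=
          fun hm => hcnotk (hrun.chain_sub hk hm)
        obtain ⟨hne, ⟨hh1, hh2⟩, hstop, hstep⟩ := (hrun.2.2 k hk).1
        constructor
        · refine ⟨hne, ⟨?_, ?_⟩, ?_, ?_⟩
          · refine Finset.mem_insert_of_mem (Finset.mem_erase.2 ⟨?_, hh1⟩)
            intro hcc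
            exact hc2notchain (hcc ▸ mem_of_getD (List.length_pos_iff.2 hne))
          · intro m hm
            rcases Finset.mem_insert.1 hm with rfl | hm'
            · have h1 := hh2 _ hc2k
              have h2 : (L.getD k []).getD 0 0 ≠ b + 2 :=
                fun hcc => hc2notchain (hcc ▸ mem_of_getD (List.length_pos_iff.2 hne))
              omega
            · exact hh2 m (Finset.mem_erase.1 hm').2
          · intro j hj hm
            rcases Finset.mem_insert.1 hj with rfl | hj'
            · exact hstop (b+2) hc2k (hup (hM'sub _ hm) (by omega) (by omega))
            · exact hstop j (Finset.mem_erase.1 hj').2 (hM'sub _ hm)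
          · intro i hi
            obtain ⟨h1, h2, h3⟩ := hstep i hi
            refine ⟨?_, ?_, ?_⟩
            · refine Finset.mem_insert_of_mem (Finset.mem_erase.2 ⟨?_, h1⟩)
              intro hcc
              exact hc2notchain (hcc ▸ mem_of_getD (by omega))
            · refine hM'of h2 ?_
              rintro ⟨hca, hcc⟩
              exact hcnotchain (hcc ▸ mem_of_getD (by omega))
            · intro j' hj' hm
              rcases Finset.mem_insert.1 hj' with rfl | hj''
              · have := h3 (b+2) hc2k (hup (hM'sub _ hm) (by omega) (by omega))
                have h4 : (L.getD k []).getD (i+1) 0 ≠ b + 2 :=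
                  fun hcc => hc2notchain (hcc ▸ mem_of_getD (by omega))
                omega
              · exact h3 j' (Finset.mem_erase.1 hj'').2 (hM'sub _ hm)
        · have hrec : R (k + 1) = R k \ (L.getD k []).toFinset := (hrun.2.2 k hk).2
          ext x
          simp only [Finset.mem_insert, Finset.mem_erase, hrec, Finset.mem_sdiff,
            List.mem_toFinset]
          constructor
          · rintro (rfl | ⟨hxne, hxR, hxs⟩)
            · exact ⟨Or.inl rfl, hcnotchain⟩
            · exact ⟨Or.inr ⟨hxne, hxR⟩, hxs⟩
          · rintro ⟨(rfl | ⟨hxne, hxR⟩), hxs⟩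
            · exact Or.inl rfl
            · exact Or.inr ⟨hxne, hxR, hxs⟩
      · -- k = i2
        subst hk2
        rw [if_pos rfl]
        simp only [hRfdef]
        rw [if_neg (by omega), if_pos le_rfl, if_neg (by omega), if_neg (by omega)]
        obtain ⟨hne, ⟨hh1, hh2⟩, hstop, hstep⟩ := id hcs2
        have hlen2' : s2'.length = s2.length := by rw [hs2'def, List.length_set]
        constructor
        · refine ⟨by rw [← List.length_pos_iff, hlen2']; omega, ⟨?_, ?_⟩, ?_, ?_⟩
          · -- head mem
            by_cases h0 : j2 = 0
            · rw [hs2'def, set_getD (m := 0) (by omega), if_pos h0]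
              exact Finset.mem_insert_self _ _
            · rw [hs2'def, set_getD (m := 0) (by omega), if_neg h0]
              refine Finset.mem_insert_of_mem (Finset.mem_erase.2 ⟨?_, hh1⟩)
              intro hcc
              exact h0 (hcs2.getD_inj hMlt (by omega) hj2 (by rw [hcc, hj2v])).symm
          · -- head min
            intro m hm
            by_cases h0 : j2 = 0
            · rw [hs2'def, set_getD (m := 0) (by omega), if_pos h0]
              rcases Finset.mem_insert.1 hm with rfl | hm'
              · omega
              · have := hh2 m (Finset.mem_erase.1 hm').2
                have h2 := (Finset.mem_erase.1 hm').1
                have hv0 : s2.getD 0 0 = b + 2 := h0 ▸ hj2v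
                omega
            · rw [hs2'def, set_getD (m := 0) (by omega), if_neg h0]
              rcases Finset.mem_insert.1 hm with rfl | hm'
              · have h1 := hh2 _ hc2R2
                have h2 : s2.getD 0 0 ≠ b + 2 :=
                  fun hcc => h0 (hcs2.getD_inj hMlt (by omega) hj2 (by rw [hcc, hj2v])).symm
                omega
              · exact hh2 m (Finset.mem_erase.1 hm').2
          · -- stop
            intro j hj hmem
            rw [hlen2'] at hmem
            by_cases hl : j2 = s2.length - 1
            · rw [hs2'def, set_getD (m := s2.length - 1) (by omega), if_pos hl] at hmem
              rcases Finset.mem_insert.1 hj with rfl | hj'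
              · exact absurd (hMlt _ (hM'sub _ hmem)) (by omega)
              · have := hstop j (Finset.mem_erase.1 hj').2
                rw [← hl, hj2v] at this
                exact this (hM6 (hM'sub _ hmem))
            · rw [hs2'def, set_getD (m := s2.length - 1) (by omega), if_neg hl] at hmem
              rcases Finset.mem_insert.1 hj with rfl | hj'
              · exact hstop (b+2) hc2R2 (hup (hM'sub _ hmem) (by omega) (by omega))
              · exact hstop j (Finset.mem_erase.1 hj').2 (hM'sub _ hmem)
          · -- step
            intro i hi
            rw [hlen2'] at hi
            by_cases hip1 : j2 = i + 1
            · -- pair (y, b+1)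
              obtain ⟨h1, h2, h3⟩ := hstep i hi
              have hv : s2.getD (i+1) 0 = b + 2 := hip1 ▸ hj2v
              rw [hv] at h2 h3
              have h5 := hM5 h2
              have hyne : s2.getD i 0 ≠ a := ha_ne (mem_of_getD (by omega))
              refine ⟨?_, ?_, ?_⟩
              · rw [hs2'def, set_getD (m := i+1) (by omega), if_pos hip1]
                exact Finset.mem_insert_self _ _
              · rw [hs2'def, set_getD (m := i) (by omega), if_neg (by omega),
                  set_getD (m := i+1) (by omega), if_pos hip1]
                exact hM'of h5.1 (fun hc => hyne hc.1)
              · intro j' hj' hm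
                rw [hs2'def, set_getD (m := i) (by omega), if_neg (by omega)] at hm
                rw [hs2'def, set_getD (m := i+1) (by omega), if_pos hip1]
                rcases Finset.mem_insert.1 hj' with rfl | hj''
                · omega
                · have := h3 j' (Finset.mem_erase.1 hj'').2 (hM'sub _ hm)
                  omega
            · by_cases hieq : j2 = i
              · -- pair (b+1, e)
                obtain ⟨h1, h2, h3⟩ := hstep i hi
                have hv : s2.getD i 0 = b + 2 := hieq ▸ hj2v
                rw [hv] at h2 h3
                have h2' : (b + 1, s2.getD (i+1) 0) ∈ M := hdown h2
                have hene : s2.getD (i+1) 0 ≠ b + 2 :=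
                  fun hcc => hip1 (hcs2.getD_inj hMlt hj2 (by omega) (by rw [hj2v, hcc]))
                refine ⟨?_, ?_, ?_⟩
                · rw [hs2'def, set_getD (m := i+1) (by omega), if_neg hip1]
                  exact Finset.mem_insert_of_mem (Finset.mem_erase.2 ⟨hene, h1⟩)
                · rw [hs2'def, set_getD (m := i) (by omega), if_pos hieq,
                    set_getD (m := i+1) (by omega), if_neg hip1]
                  exact hM'of h2' (by omega)
                · intro j' hj' hm
                  rw [hs2'def, set_getD (m := i) (by omega), if_pos hieq] at hm
                  rw [hs2'def, set_getD (m := i+1) (by omega), if_neg hip1]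
                  rcases Finset.mem_insert.1 hj' with rfl | hj''
                  · exact absurd (hMlt _ (hM'sub _ hm)) (by omega)
                  · exact h3 j' (Finset.mem_erase.1 hj'').2 (hM6 (hM'sub _ hm))
              · -- untouched pair
                obtain ⟨h1, h2, h3⟩ := hstep i hi
                have hene : s2.getD (i+1) 0 ≠ b + 2 :=
                  fun hcc => hip1 (hcs2.getD_inj hMlt hj2 (by omega) (by rw [hj2v, hcc]))
                have hene1 : s2.getD (i+1) 0 ≠ b + 1 := by
                  intro hcc
                  have hmm := hrun.chain_sub hi2 (mem_of_getD (s := s2) (by omega : i+1 < s2.length))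
                  rw [hcc] at hmm
                  exact hcnotR2 hmm
                refine ⟨?_, ?_, ?_⟩
                · rw [hs2'def, set_getD (m := i+1) (by omega), if_neg hip1]
                  exact Finset.mem_insert_of_mem (Finset.mem_erase.2 ⟨hene, h1⟩)
                · rw [hs2'def, set_getD (m := i) (by omega), if_neg hieq,
                    set_getD (m := i+1) (by omega), if_neg hip1]
                  exact hM'of h2 (fun hc => hene1 hc.2)
                · intro j' hj' hm
                  rw [hs2'def, set_getD (m := i) (by omega), if_neg hieq] at hm
                  rw [hs2'def, set_getD (m := i+1) (by omega), if_neg hip1]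
                  rcases Finset.mem_insert.1 hj' with rfl | hj''
                  · have := h3 (b+2) hc2R2 (hup (hM'sub _ hm) (by omega) (by omega))
                    omega
                  · exact h3 j' (Finset.mem_erase.1 hj'').2 (hM'sub _ hm)
        · -- recurrence at i2
          have hrec : R (k + 1) = R k \ s2.toFinset := (hrun.2.2 k hk).2
          ext x
          simp only [hrec, Finset.mem_sdiff, List.mem_toFinset, Finset.mem_insert,
            Finset.mem_erase, hmem_s2' x]
          constructor
          · rintro ⟨hxR, hxs⟩
            refine ⟨Or.inr ⟨fun hc => hxs (hc ▸ hc2s2), hxR⟩, fun hc => ?_⟩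
            rcases hc with ⟨hs, _⟩ | rfl
            · exact hxs hs
            · exact hcnotR2 hxR
          · rintro ⟨hd, hnot⟩
            rcases hd with rfl | ⟨hne2', hxR⟩
            · exact absurd (Or.inr rfl) hnot
            · exact ⟨hxR, fun hs => hnot (Or.inl ⟨hs, hne2'⟩)⟩
      · -- k > i2
        rw [if_neg (by omega), if_neg (by omega)]
        simp only [hRfdef]
        rw [if_neg (by omega), if_neg (by omega), if_neg (by omega), if_neg (by omega)]
        exact ⟨hCSother k hk (by omega), (hrun.2.2 k hk).2⟩
  · -- map length equality
    refine List.ext_getElem (by simp [hL''def]) (fun k h1 h2 => ?_)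
    simp only [List.getElem_map, hL''def, List.getElem_set]
    rw [List.length_map, List.length_set, List.length_set] at h1
    split_ifs with hc1 hc2
    · subst hc1
      rw [hs2'def, List.length_set, hs2def, List.getD_eq_getElem _ _ (by omega)]
    · subst hc2
      rw [hs1'def, List.length_set, hs1def, List.getD_eq_getElem _ _ (by omega)]
    · rfl

end GA

/-- The Gerstenhaber partition `λ_I` is invariant under the basic
move: if ideals `I` and `J` of the type `A n` root poset are related by a basic
move, then `λ_I = λ_J` (the lengths of the characteristic sequences agree). -/
theorem gerstenhaber_partition_invariant_under_basic_move (n : ℕ)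
    (I J : Finset (ℕ × ℕ)) (hmove : BasicMove n I J)
    (L L' : List (List ℕ))
    (hL : IsCharSeqList n (toMatrixIdeal I) L)
    (hL' : IsCharSeqList n (toMatrixIdeal J) L') :
    L.map List.length = L'.map List.length := by
  obtain ⟨hI, p, hpmin, hJ, hdisj⟩ := hmove
  obtain ⟨a, b⟩ := p
  subst hJ
  have hM'mem : ∀ q : ℕ × ℕ,
      q ∈ toMatrixIdeal (I.erase (a, b)) ↔ q ∈ toMatrixIdeal I ∧ q ≠ (a, b + 1) := by
    rintro ⟨x, j⟩
    constructor
    · intro h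
      obtain ⟨y, hy, rfl⟩ := GA.mem_toM.1 h
      rw [Finset.mem_erase] at hy
      refine ⟨GA.mem_toM.2 ⟨y, hy.2, rfl⟩, fun hc => hy.1 ?_⟩
      rw [Prod.ext_iff] at hc ⊢
      simp only at hc ⊢
      exact ⟨hc.1, by omega⟩
    · rintro ⟨h, hne⟩
      obtain ⟨y, hy, rfl⟩ := GA.mem_toM.1 h
      refine GA.mem_toM.2 ⟨y, Finset.mem_erase.2 ⟨fun hc => hne ?_, hy⟩, rfl⟩
      rw [Prod.ext_iff] at hc ⊢
      simp only at hc ⊢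
      exact ⟨hc.1, by omega⟩
  obtain ⟨R, hrun⟩ := GA.isCharSeqList_iff.1 hL
  obtain ⟨R', hrun'⟩ := GA.isCharSeqList_iff.1 hL'
  by_cases HA : ∃ k, k < L.length ∧ ∃ i, i + 1 < (L.getD k []).length ∧
      (L.getD k []).getD i 0 = a ∧ (L.getD k []).getD (i+1) 0 = b + 1
  · rcases hdisj with ⟨ha2, hst⟩ | ⟨hcn, hst⟩
    · exact absurd HA (fun h => GA.l_case hI hpmin ha2 hst rfl hrun h)
    · obtain ⟨L'', R'', hrun'', hmap⟩ := GA.r_case hI hpmin hcn hst hM'mem hrun HA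
      rw [GA.RunOK.unique hrun' hrun'', hmap]
  · have hnot : ∀ k, k < L.length → ∀ i, i + 1 < (L.getD k []).length →
        ¬((L.getD k []).getD i 0 = a ∧ (L.getD k []).getD (i+1) 0 = b + 1) :=
      fun k hk i hi hpair => HA ⟨k, hk, i, hi, hpair.1, hpair.2⟩
    have hrunEQ := GA.eq_case hM'mem hrun hnot
    rw [GA.RunOK.unique hrun' hrunEQ]
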